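/- Let g be a finite-dimensional Lie algebra over ℂ with an element Z ∈ g such that g is the internal direct sum g = g₋₂ ⊕ g₋₁ ⊕ g₀ ⊕ g₁ ⊕ g₂ of the eigenspaces gₖ = {X ∈ g | ⁅Z, X⁆ = (k : ℂ) • X} of ad Z. Set γ₃ := exp((2πi/3) • ad Z) and γ₄ := exp((2πi/4) • ad Z). Then the fixed-point sets of γ₃ and γ₄ coincide: {X ∈ g | γ₃ X = X} = {X ∈ g | γ₄ X = X}. (This is the abstract content of Lemma 8.1: (e₈^ℂ)^{κ₄} = (e₈^ℂ)^{κ₃}.) -/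

import Mathlib

open NormedSpace DirectSum

lemma exp_apply_of_eigen {g : Type*} [NormedAddCommGroup g] [NormedSpace ℂ g]
    [CompleteSpace g] (T : g →L[ℂ] g) (μ : ℂ) (X : g) (hX : T X = μ • X) :
    NormedSpace.exp T X = Complex.exp μ • X := by
  have hpow : ∀ n : ℕ, (T ^ n) X = μ ^ n • X := by
    intro n
    induction n with
    | zero => simp
    | succ n ih =>
        rw [pow_succ, ContinuousLinearMap.mul_apply, hX, map_smul, ih, smul_smul,
          pow_succ, mul_comm]
  have h1 : HasSum (fun n : ℕ => (Nat.factorial n : ℂ)⁻¹ • T ^ n) (NormedSpace.exp T) :=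
    NormedSpace.exp_series_hasSum_exp' (𝕂 := ℂ) T
  have h2 : HasSum (fun n : ℕ => (Nat.factorial n : ℂ)⁻¹ • (μ ^ n • X))
      (NormedSpace.exp T X) := by
    have := h1.mapL (ContinuousLinearMap.apply ℂ g X)
    simpa [hpow] using this
  have h3 : HasSum (fun n : ℕ => (Nat.factorial n : ℂ)⁻¹ • μ ^ n) (Complex.exp μ) := by
    rw [Complex.exp_eq_exp_ℂ]
    exact NormedSpace.exp_series_hasSum_exp' (𝕂 := ℂ) μ
  have h4 : HasSum (fun n : ℕ => (Nat.factorial n : ℂ)⁻¹ • (μ ^ n • X))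
      (Complex.exp μ • X) := by
    simpa [smul_smul] using h3.smul_const X
  exact h2.unique h4

lemma fixed_eq_eigen {g : Type*} [NormedAddCommGroup g] [NormedSpace ℂ g]
    [FiniteDimensional ℂ g] (A : g →ₗ[ℂ] g)
    (hdecomp : DirectSum.IsInternal fun k : Fin 5 =>
      Module.End.eigenspace A (((k : ℕ) : ℂ) - 2))
    (c : ℂ)
    (hc : ∀ k : Fin 5, k ≠ (2 : Fin 5) → Complex.exp (c * (((k : ℕ) : ℂ) - 2)) ≠ 1) :
    {X : g | NormedSpace.exp (c • LinearMap.toContinuousLinearMap A) X = X}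
      = ↑(Module.End.eigenspace A 0) := by
  set S : Fin 5 → Submodule ℂ g :=
    fun k : Fin 5 => Module.End.eigenspace A (((k : ℕ) : ℂ) - 2) with hS
  have key : ∀ (μ : ℂ) (X : g), X ∈ Module.End.eigenspace A μ →
      NormedSpace.exp (c • LinearMap.toContinuousLinearMap A) X
        = Complex.exp (c * μ) • X := by
    intro μ X hX
    apply exp_apply_of_eigen
    have h : A X = μ • X := Module.End.mem_eigenspace_iff.mp hX
    simp [h, smul_smul]
  have hrep : ∀ e : (⨁ k, S k),
      DirectSum.coeAddMonoidHom S e = ∑ k : Fin 5, ((e k : g)) := by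
    intro e
    conv_lhs => rw [← DirectSum.sum_univ_of e]
    rw [map_sum]
    simp [DirectSum.coeAddMonoidHom_of]
  ext X
  simp only [Set.mem_setOf_eq, SetLike.mem_coe]
  constructor
  · intro hfix
    obtain ⟨d, rfl⟩ := hdecomp.surjective X
    set d' : ⨁ k, S k := DFinsupp.mapRange
        (fun k x => Complex.exp (c * (((k : ℕ) : ℂ) - 2)) • x)
        (fun k => smul_zero _) d with hd'
    have hd'app : ∀ k : Fin 5,
        d' k = Complex.exp (c * (((k : ℕ) : ℂ) - 2)) • d k :=
      fun k => DFinsupp.mapRange_apply _ _ d k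
    have hex : DirectSum.coeAddMonoidHom S d' = DirectSum.coeAddMonoidHom S d := by
      rw [hrep d']
      have heq : (∑ k : Fin 5, ((d' k : g)))
          = NormedSpace.exp (c • LinearMap.toContinuousLinearMap A)
              (DirectSum.coeAddMonoidHom S d) := by
        rw [hrep d, map_sum]
        refine Finset.sum_congr rfl fun k _ => ?_
        rw [key _ _ (d k).2, hd'app k]
        rfl
      rw [heq, hfix]
    have hdd : d' = d := hdecomp.injective hex
    have hcomp : ∀ k : Fin 5,
        Complex.exp (c * (((k : ℕ) : ℂ) - 2)) • d k = d k := by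
      intro k
      rw [← hd'app k, hdd]
    have hzero : ∀ k : Fin 5, k ≠ 2 → d k = 0 := by
      intro k hk
      have h2 : (Complex.exp (c * (((k : ℕ) : ℂ) - 2)) - 1) • d k = 0 := by
        rw [sub_smul, one_smul, hcomp k, sub_self]
      rcases smul_eq_zero.mp h2 with h | h
      · exact absurd (sub_eq_zero.mp h) (hc k hk)
      · exact h
    have hX2 : DirectSum.coeAddMonoidHom S d = ((d 2 : g)) := by
      rw [hrep d, Finset.sum_eq_single 2 (fun j _ hj => by rw [hzero j hj]; simp)
        (by simp)]
    rw [hX2]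
    have h2 := (d 2).2
    simp only [hS] at h2
    norm_num at h2
    rw [Module.End.mem_eigenspace_iff, zero_smul]
    exact h2
  · intro hX
    have := key 0 X hX
    simpa using this

/-- Let `g` be a finite-dimensional Lie algebra over `ℂ` (presented as a
finite-dimensional complex vector space together with a bilinear bracket which is alternating
and satisfies the Jacobi identity in Leibniz form), and let `Z ∈ g` be such that `g` is the
internal direct sum of the eigenspaces `gₖ = {X | ⁅Z, X⁆ = (k : ℂ) • X}`, `k = -2, …, 2`, of
`ad Z = bracket Z`.  Set `γ₃ := exp((2πi/3) • ad Z)` and `γ₄ := exp((2πi/4) • ad Z)`.  Then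
the fixed-point sets of `γ₃` and `γ₄` coincide.  (This is the abstract content of Lemma 8.1:
`(e₈^ℂ)^{κ₄} = (e₈^ℂ)^{κ₃}`.) -/
theorem fixedPoints_exp_two_pi_I_div_three_eq_fixedPoints_exp_two_pi_I_div_four
    (g : Type*) [NormedAddCommGroup g] [NormedSpace ℂ g] [FiniteDimensional ℂ g]
    (bracket : g →ₗ[ℂ] g →ₗ[ℂ] g)
    (halt : ∀ X : g, bracket X X = 0)
    (hjacobi : ∀ X Y W : g,
      bracket X (bracket Y W) = bracket (bracket X Y) W + bracket Y (bracket X W))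
    (Z : g)
    (hdecomp : DirectSum.IsInternal fun k : Fin 5 =>
      Module.End.eigenspace (bracket Z) (((k : ℕ) : ℂ) - 2)) :
    {X : g | NormedSpace.exp
        ((2 * (Real.pi : ℂ) * Complex.I / 3) •
          LinearMap.toContinuousLinearMap (bracket Z)) X = X}
      = {X : g | NormedSpace.exp
          ((2 * (Real.pi : ℂ) * Complex.I / 4) •
            LinearMap.toContinuousLinearMap (bracket Z)) X = X} := by
  have hne : (2 * (Real.pi : ℂ) * Complex.I) ≠ 0 := by
    simp [Real.pi_ne_zero, Complex.I_ne_zero, Complex.ofReal_ne_zero]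
  have hlt : ∀ k : Fin 5, (k : ℕ) < 5 := fun k => k.isLt
  have h3 : ∀ k : Fin 5, k ≠ (2 : Fin 5) →
      Complex.exp ((2 * (Real.pi : ℂ) * Complex.I / 3) * (((k : ℕ) : ℂ) - 2)) ≠ 1 := by
    intro k hk h
    obtain ⟨n, hn⟩ := Complex.exp_eq_one_iff.mp h
    have h2' : 2 * (Real.pi : ℂ) * Complex.I * (((k : ℕ) : ℂ) - 2)
        = 2 * (Real.pi : ℂ) * Complex.I * (3 * n) := by linear_combination 3 * hn
    have h2 : ((k : ℕ) : ℂ) - 2 = 3 * n := mul_left_cancel₀ hne h2'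
    have hz : ((k : ℕ) : ℤ) - 2 = 3 * n := by exact_mod_cast h2
    have hk2 : (k : ℕ) ≠ 2 := fun hh => hk (Fin.ext hh)
    have := hlt k
    omega
  have h4 : ∀ k : Fin 5, k ≠ (2 : Fin 5) →
      Complex.exp ((2 * (Real.pi : ℂ) * Complex.I / 4) * (((k : ℕ) : ℂ) - 2)) ≠ 1 := by
    intro k hk h
    obtain ⟨n, hn⟩ := Complex.exp_eq_one_iff.mp h
    have h2' : 2 * (Real.pi : ℂ) * Complex.I * (((k : ℕ) : ℂ) - 2)
        = 2 * (Real.pi : ℂ) * Complex.I * (4 * n) := by linear_combination 4 * hn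
    have h2 : ((k : ℕ) : ℂ) - 2 = 4 * n := mul_left_cancel₀ hne h2'
    have hz : ((k : ℕ) : ℤ) - 2 = 4 * n := by exact_mod_cast h2
    have hk2 : (k : ℕ) ≠ 2 := fun hh => hk (Fin.ext hh)
    have := hlt k
    omega
  rw [fixed_eq_eigen (bracket Z) hdecomp _ h3, fixed_eq_eigen (bracket Z) hdecomp _ h4]
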